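/- arXiv:2401.09147 — 3 statements merged into one kernel-verified Lean document; each statement's English description precedes it below -/
import Mathlib

section
/- Suppose w_δ : ℝ^n → ℝ satisfy the oscillation bound w_δ(x) − e^{−δ t̄} w_δ(x̄) ≤ (C_L/δ)(1 − e^{−2Sδ}) whenever t̄ ≤ 2S, together with the bounds −C/δ ≤ w_δ ≤ C/δ. Then |δ w_δ(x) − δ w_δ(x̄)| ≤ (C_L + C)(1 − e^{−2Sδ}) for all x, x̄ ∈ ℝ^n; in particular the oscillation of δ w_δ is O(δ) as δ → 0+. -/
/-- From the discounted suboptimality oscillation bound and the bounds `|w_δ| ≤ C/δ`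
one deduces `|δ w_δ(x) − δ w_δ(x̄)| ≤ (C_L + C)(1 − e^{−2Sδ})`, which is `O(δ)`. -/
theorem oscillation_O_delta {n : ℕ} (w : (Fin n → ℝ) → ℝ)
    (C CL S δ : ℝ) (hC : 0 < C) (hCL : 0 < CL) (hS : 0 < S) (hδ : 0 < δ)
    (hosc : ∀ x xb : Fin n → ℝ, ∃ t ∈ Set.Icc (0:ℝ) (2 * S),
      w x - Real.exp (-(δ * t)) * w xb ≤ (CL / δ) * (1 - Real.exp (-(2 * S * δ))))
    (hbd : ∀ z, |w z| ≤ C / δ) :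
    ∀ x xb : Fin n → ℝ,
      |δ * w x - δ * w xb| ≤ (CL + C) * (1 - Real.exp (-(2 * S * δ))) := by
  have aux : ∀ x xb : Fin n → ℝ,
      δ * w x - δ * w xb ≤ (CL + C) * (1 - Real.exp (-(2 * S * δ))) := by
    intro x xb
    obtain ⟨t, ht, hle⟩ := hosc x xb
    obtain ⟨ht0, ht2S⟩ := ht
    have hE1 : Real.exp (-(δ * t)) ≤ 1 := by
      apply Real.exp_le_one_iff.mpr
      nlinarith
    have hE2 : Real.exp (-(2 * S * δ)) ≤ Real.exp (-(δ * t)) := by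
      apply Real.exp_le_exp.mpr
      nlinarith
    have hb := abs_le.mp (hbd xb)
    have hmul : δ * (w x - Real.exp (-(δ * t)) * w xb)
        ≤ δ * ((CL / δ) * (1 - Real.exp (-(2 * S * δ)))) :=
      mul_le_mul_of_nonneg_left hle hδ.le
    have hδne : δ ≠ 0 := ne_of_gt hδ
    have h1 : δ * (w x - Real.exp (-(δ * t)) * w xb)
        ≤ CL * (1 - Real.exp (-(2 * S * δ))) := by
      calc δ * (w x - Real.exp (-(δ * t)) * w xb)
          ≤ δ * ((CL / δ) * (1 - Real.exp (-(2 * S * δ)))) := hmul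
        _ = CL * (1 - Real.exp (-(2 * S * δ))) := by field_simp
    have h2 : δ * ((Real.exp (-(δ * t)) - 1) * w xb)
        ≤ C * (1 - Real.exp (-(2 * S * δ))) := by
      have hCδ : C / δ * δ = C := by field_simp
      nlinarith [mul_nonneg (mul_nonneg hδ.le (sub_nonneg.mpr hE1)) (by linarith [hb.1] : (0:ℝ) ≤ w xb + C / δ),
        mul_nonneg (mul_nonneg hδ.le (sub_nonneg.mpr hE2)) (div_pos hC hδ).le]
    nlinarith
  intro x xb
  rw [abs_sub_le_iff]
  exact ⟨aux x xb, aux xb x⟩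
end

section
/- Define λ₁ := sup{ λ : the equation λ + H(x, Du) = 0 has a bounded usc viscosity subsolution } and λ₂ := inf{ λ : it has a bounded lsc viscosity supersolution }. If H satisfies the comparison principle (for every δ > 0, any bounded usc subsolution u and bounded lsc supersolution v of δw + H(x, Dw) = 0 satisfy u ≤ v), then λ₁ ≤ λ₂. -/
open Topology

/-- A bounded real-valued function. -/
def IsBdd {α : Type*} (u : α → ℝ) : Prop := ∃ M, ∀ x, |u x| ≤ M

/-- Viscosity subsolution of `G(x, u(x), Du(x)) = 0` (test functions touching from above). -/
def IsViscSubsolution {n : ℕ}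
    (G : EuclideanSpace ℝ (Fin n) → ℝ → EuclideanSpace ℝ (Fin n) → ℝ)
    (u : EuclideanSpace ℝ (Fin n) → ℝ) : Prop :=
  ∀ φ : EuclideanSpace ℝ (Fin n) → ℝ, ContDiff ℝ 1 φ →
    ∀ x p, HasGradientAt φ p x →
      IsLocalMax (fun y => u y - φ y) x → G x (u x) p ≤ 0

/-- Viscosity supersolution of `G(x, u(x), Du(x)) = 0` (test functions touching from below). -/
def IsViscSupersolution {n : ℕ}
    (G : EuclideanSpace ℝ (Fin n) → ℝ → EuclideanSpace ℝ (Fin n) → ℝ)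
    (u : EuclideanSpace ℝ (Fin n) → ℝ) : Prop :=
  ∀ φ : EuclideanSpace ℝ (Fin n) → ℝ, ContDiff ℝ 1 φ →
    ∀ x p, HasGradientAt φ p x →
      IsLocalMin (fun y => u y - φ y) x → G x (u x) p ≥ 0

/-- Shifting a subsolution of `l + H = 0` by a constant gives a subsolution of the
discounted equation, provided the constant is small enough. -/
lemma sub_shift {n : ℕ}
    (H : EuclideanSpace ℝ (Fin n) → EuclideanSpace ℝ (Fin n) → ℝ)
    (l δ c : ℝ) (u : EuclideanSpace ℝ (Fin n) → ℝ)
    (hu : IsViscSubsolution (fun x _ p => l + H x p) u)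
    (hbd : ∀ x, δ * (u x + c) ≤ l) :
    IsViscSubsolution (fun x r p => δ * r + H x p) (fun x => u x + c) := by
  intro φ hφ x p hp hmax
  have hφ' : ContDiff ℝ 1 (fun y => φ y - c) := hφ.sub contDiff_const
  have hp' : HasGradientAt (fun y => φ y - c) p x := by
    rw [hasGradientAt_iff_hasFDerivAt] at hp ⊢
    exact hp.sub_const c
  have hmax' : IsLocalMax (fun y => u y - (φ y - c)) x := by
    have : (fun y => u y - (φ y - c)) = fun y => u y + c - φ y := by ext y; ring
    rw [this]; exact hmax
  have h := hu (fun y => φ y - c) hφ' x p hp' hmax'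
  have := hbd x
  show δ * (u x + c) + H x p ≤ 0
  simp only at h
  linarith

lemma super_shift {n : ℕ}
    (H : EuclideanSpace ℝ (Fin n) → EuclideanSpace ℝ (Fin n) → ℝ)
    (l δ c : ℝ) (v : EuclideanSpace ℝ (Fin n) → ℝ)
    (hv : IsViscSupersolution (fun x _ p => l + H x p) v)
    (hbd : ∀ x, l ≤ δ * (v x + c)) :
    IsViscSupersolution (fun x r p => δ * r + H x p) (fun x => v x + c) := by
  intro φ hφ x p hp hmin
  have hφ' : ContDiff ℝ 1 (fun y => φ y - c) := hφ.sub contDiff_const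
  have hp' : HasGradientAt (fun y => φ y - c) p x := by
    rw [hasGradientAt_iff_hasFDerivAt] at hp ⊢
    exact hp.sub_const c
  have hmin' : IsLocalMin (fun y => v y - (φ y - c)) x := by
    have : (fun y => v y - (φ y - c)) = fun y => v y + c - φ y := by ext y; ring
    rw [this]; exact hmin
  have h := hv (fun y => φ y - c) hφ' x p hp' hmin'
  have := hbd x
  show 0 ≤ δ * (v x + c) + H x p
  simp only [ge_iff_le] at h
  linarith

/-- If `H` satisfies the comparison principle for the discounted equations
`δw + H(x, Dw) = 0`, then
`λ₁ = sup{λ : ∃ bounded usc subsolution of λ + H(x,Du) = 0}` is at most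
`λ₂ = inf{λ : ∃ bounded lsc supersolution of λ + H(x,Du) = 0}`. -/
theorem lambda1_le_lambda2 {n : ℕ}
    (H : EuclideanSpace ℝ (Fin n) → EuclideanSpace ℝ (Fin n) → ℝ)
    (hH : Continuous fun q : EuclideanSpace ℝ (Fin n) × EuclideanSpace ℝ (Fin n) => H q.1 q.2)
    (hcomp : ∀ δ > (0:ℝ), ∀ u v : EuclideanSpace ℝ (Fin n) → ℝ,
      IsBdd u → UpperSemicontinuous u → IsBdd v → LowerSemicontinuous v →
      IsViscSubsolution (fun x r p => δ * r + H x p) u →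
      IsViscSupersolution (fun x r p => δ * r + H x p) v →
      ∀ x, u x ≤ v x)
    (hne₁ : {l : ℝ | ∃ u, IsBdd u ∧ UpperSemicontinuous u ∧
      IsViscSubsolution (fun x _ p => l + H x p) u}.Nonempty)
    (hne₂ : {l : ℝ | ∃ v, IsBdd v ∧ LowerSemicontinuous v ∧
      IsViscSupersolution (fun x _ p => l + H x p) v}.Nonempty) :
    sSup {l : ℝ | ∃ u, IsBdd u ∧ UpperSemicontinuous u ∧
        IsViscSubsolution (fun x _ p => l + H x p) u} ≤
      sInf {l : ℝ | ∃ v, IsBdd v ∧ LowerSemicontinuous v ∧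
        IsViscSupersolution (fun x _ p => l + H x p) v} := by
  have key : ∀ a ∈ {l : ℝ | ∃ u, IsBdd u ∧ UpperSemicontinuous u ∧
      IsViscSubsolution (fun x _ p => l + H x p) u},
      ∀ b ∈ {l : ℝ | ∃ v, IsBdd v ∧ LowerSemicontinuous v ∧
      IsViscSupersolution (fun x _ p => l + H x p) v}, a ≤ b := by
    rintro a ⟨u, ⟨M, hM⟩, husc, hu⟩ b ⟨v, ⟨N, hN⟩, hvsc, hv⟩
    -- For each δ > 0, comparison applied to the shifted functions
    have main : ∀ δ > (0:ℝ), a - b ≤ δ * (2 * M + 2 * N) := by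
      intro δ hδ
      set c₁ : ℝ := a / δ - M with hc₁
      set c₂ : ℝ := b / δ + N with hc₂
      have hu' : IsViscSubsolution (fun x r p => δ * r + H x p) (fun x => u x + c₁) := by
        apply sub_shift H a δ c₁ u hu
        intro x
        have hx := (abs_le.mp (hM x)).2
        have : δ * (u x + c₁) = δ * (u x - M) + a := by
          rw [hc₁]
          have hd : δ * (a / δ) = a := by rw [mul_div_assoc', mul_comm δ a, mul_div_assoc, div_self hδ.ne', mul_one]
          linear_combination hd
        rw [this]
        nlinarith
      have hv' : IsViscSupersolution (fun x r p => δ * r + H x p) (fun x => v x + c₂) := by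
        apply super_shift H b δ c₂ v hv
        intro x
        have hx := (abs_le.mp (hN x)).1
        have : δ * (v x + c₂) = δ * (v x + N) + b := by
          rw [hc₂]
          have hd : δ * (b / δ) = b := by rw [mul_div_assoc', mul_comm δ b, mul_div_assoc, div_self hδ.ne', mul_one]
          linear_combination hd
        rw [this]
        nlinarith
      have hub : IsBdd (fun x => u x + c₁) := ⟨M + |c₁|, fun x => by
        calc |u x + c₁| ≤ |u x| + |c₁| := abs_add_le _ _
          _ ≤ M + |c₁| := by linarith [hM x]⟩
      have hvb : IsBdd (fun x => v x + c₂) := ⟨N + |c₂|, fun x => by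
        calc |v x + c₂| ≤ |v x| + |c₂| := abs_add_le _ _
          _ ≤ N + |c₂| := by linarith [hN x]⟩
      have husc' : UpperSemicontinuous (fun x => u x + c₁) := by
        intro x y hy
        filter_upwards [husc x (y - c₁) (by simpa using lt_sub_iff_add_lt.mpr hy)] with z hz
        simpa using lt_sub_iff_add_lt.mp hz
      have hvsc' : LowerSemicontinuous (fun x => v x + c₂) := by
        intro x y hy
        filter_upwards [hvsc x (y - c₂) (by simpa using sub_lt_iff_lt_add.mpr hy)] with z hz
        simpa using sub_lt_iff_lt_add.mp hz
      have hcmp := hcomp δ hδ _ _ hub husc' hvb hvsc' hu' hv' 0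
      -- u 0 + a/δ - M ≤ v 0 + b/δ + N
      have h1 := (abs_le.mp (hM 0)).1
      have h2 := (abs_le.mp (hN 0)).2
      have : a / δ - b / δ ≤ 2 * M + 2 * N := by
        simp only [hc₁, hc₂] at hcmp
        linarith
      have := mul_le_mul_of_nonneg_left this hδ.le
      calc a - b = δ * (a / δ - b / δ) := by field_simp
        _ ≤ δ * (2 * M + 2 * N) := this
    -- conclude a ≤ b
    by_contra hab
    push_neg at hab
    have hM0 : (0:ℝ) ≤ M := le_trans (abs_nonneg _) (hM 0)
    have hN0 : (0:ℝ) ≤ N := le_trans (abs_nonneg _) (hN 0)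
    rcases eq_or_lt_of_le (by linarith : (0:ℝ) ≤ 2 * M + 2 * N) with hC | hC
    · have := main 1 one_pos
      rw [← hC] at this
      linarith
    · have hδ : (a - b) / (2 * (2 * M + 2 * N)) > 0 := div_pos (by linarith) (by linarith)
      have := main _ hδ
      rw [div_mul_eq_mul_div, mul_comm] at this
      have h2 : (2 * M + 2 * N) * (a - b) / (2 * (2 * M + 2 * N)) = (a - b) / 2 := by
        rw [mul_comm 2 (2 * M + 2 * N)]
        exact mul_div_mul_left _ _ hC.ne'
      rw [h2] at this
      linarith
  exact csSup_le hne₁ fun a ha => le_csInf hne₂ fun b hb => key a ha b hb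
end

section
/- Suppose v : ℝ^n → ℝ is a bounded usc viscosity subsolution of μ + H(x, Dv) ≤ 0, w solves the Cauchy problem ∂_t w + H(x, D_x w) = 0 with initial data w₀ ≥ v, and the parabolic comparison principle holds. Then liminf_{t→∞} min_x w(x,t)/t ≥ μ. Symmetrically, if u is a bounded lsc supersolution at level ν and w₀ ≤ u + C, then limsup_{t→∞} max_x w(x,t)/t ≤ ν. Hence if the critical value λ̄ satisfies λ₁ = λ₂ = λ̄, then w(x,t)/t → λ̄ uniformly in x. -/
open Topology

/-- Viscosity subsolution of the evolutive equation `G(x, w, ∂ₜw, D_x w) = 0`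
on `ℝⁿ × (0,∞)`. -/
def IsParabSubsolution {n : ℕ}
    (G : EuclideanSpace ℝ (Fin n) → ℝ → ℝ → EuclideanSpace ℝ (Fin n) → ℝ)
    (w : EuclideanSpace ℝ (Fin n) → ℝ → ℝ) : Prop :=
  ∀ φ : EuclideanSpace ℝ (Fin n) → ℝ → ℝ,
    ContDiff ℝ 1 (fun q : EuclideanSpace ℝ (Fin n) × ℝ => φ q.1 q.2) →
    ∀ x t p a, 0 < t →
      HasGradientAt (fun y => φ y t) p x →
      HasDerivAt (fun s => φ x s) a t →
      IsLocalMaxOn (fun q : EuclideanSpace ℝ (Fin n) × ℝ => w q.1 q.2 - φ q.1 q.2)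
        {q : EuclideanSpace ℝ (Fin n) × ℝ | 0 < q.2} (x, t) →
      G x (w x t) a p ≤ 0

/-- Viscosity supersolution of the evolutive equation on `ℝⁿ × (0,∞)`. -/
def IsParabSupersolution {n : ℕ}
    (G : EuclideanSpace ℝ (Fin n) → ℝ → ℝ → EuclideanSpace ℝ (Fin n) → ℝ)
    (w : EuclideanSpace ℝ (Fin n) → ℝ → ℝ) : Prop :=
  ∀ φ : EuclideanSpace ℝ (Fin n) → ℝ → ℝ,
    ContDiff ℝ 1 (fun q : EuclideanSpace ℝ (Fin n) × ℝ => φ q.1 q.2) →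
    ∀ x t p a, 0 < t →
      HasGradientAt (fun y => φ y t) p x →
      HasDerivAt (fun s => φ x s) a t →
      IsLocalMinOn (fun q : EuclideanSpace ℝ (Fin n) × ℝ => w q.1 q.2 - φ q.1 q.2)
        {q : EuclideanSpace ℝ (Fin n) × ℝ | 0 < q.2} (x, t) →
      G x (w x t) a p ≥ 0


section Aux

variable {n : ℕ}

lemma parab_of_stat_sub (H : EuclideanSpace ℝ (Fin n) → EuclideanSpace ℝ (Fin n) → ℝ)
    (μ : ℝ) (v : EuclideanSpace ℝ (Fin n) → ℝ)
    (hv : IsViscSubsolution (fun x _ p => μ + H x p) v) :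
    IsParabSubsolution (fun x _ a p => a + H x p) (fun x t => v x + μ * t) := by
  intro φ hφ x t p a ht hgrad hderiv hmax
  have hopen : IsOpen {q : EuclideanSpace ℝ (Fin n) × ℝ | 0 < q.2} :=
    isOpen_lt continuous_const continuous_snd
  have hmax' : IsLocalMax (fun q : EuclideanSpace ℝ (Fin n) × ℝ =>
      v q.1 + μ * q.2 - φ q.1 q.2) (x, t) := by
    show IsMaxFilter _ (𝓝 (x, t)) _
    rw [← hopen.nhdsWithin_eq ht]
    exact hmax
  have hcont1 : Continuous (fun y : EuclideanSpace ℝ (Fin n) => (y, t)) :=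
    continuous_id.prodMk continuous_const
  have h1 : IsLocalMax (fun y => v y - φ y t) x := by
    have := (hcont1.tendsto x).eventually hmax'
    refine this.mono fun y hy => ?_
    have h' : v y + μ * t - φ y t ≤ v x + μ * t - φ x t := hy
    simp only []
    linarith
  have hcont2 : Continuous (fun s : ℝ => ((x : EuclideanSpace ℝ (Fin n)), s)) :=
    continuous_const.prodMk continuous_id
  have h2 : IsLocalMax (fun s => v x + μ * s - φ x s) t := by
    have := (hcont2.tendsto t).eventually hmax'
    exact this
  have hda : HasDerivAt (fun s => v x + μ * s - φ x s) (μ - a) t := by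
    exact (((hasDerivAt_const t (v x)).add ((hasDerivAt_id t).const_mul μ)).sub hderiv).congr_deriv (by ring)
  have ha : μ - a = 0 := h2.hasDerivAt_eq_zero hda
  have hψ : ContDiff ℝ 1 (fun y => φ y t) :=
    hφ.comp (contDiff_id.prodMk contDiff_const)
  have := hv (fun y => φ y t) hψ x p hgrad h1
  have h3 : μ + H x p ≤ 0 := this
  show a + H x p ≤ 0
  linarith

lemma parab_of_stat_sup (H : EuclideanSpace ℝ (Fin n) → EuclideanSpace ℝ (Fin n) → ℝ)
    (ν : ℝ) (u : EuclideanSpace ℝ (Fin n) → ℝ)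
    (hu : IsViscSupersolution (fun x _ p => ν + H x p) u) :
    IsParabSupersolution (fun x _ a p => a + H x p) (fun x t => u x + ν * t) := by
  intro φ hφ x t p a ht hgrad hderiv hmin
  have hopen : IsOpen {q : EuclideanSpace ℝ (Fin n) × ℝ | 0 < q.2} :=
    isOpen_lt continuous_const continuous_snd
  have hmin' : IsLocalMin (fun q : EuclideanSpace ℝ (Fin n) × ℝ =>
      u q.1 + ν * q.2 - φ q.1 q.2) (x, t) := by
    show IsMinFilter _ (𝓝 (x, t)) _
    rw [← hopen.nhdsWithin_eq ht]
    exact hmin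
  have hcont1 : Continuous (fun y : EuclideanSpace ℝ (Fin n) => (y, t)) :=
    continuous_id.prodMk continuous_const
  have h1 : IsLocalMin (fun y => u y - φ y t) x := by
    have := (hcont1.tendsto x).eventually hmin'
    refine this.mono fun y hy => ?_
    have h' : u x + ν * t - φ x t ≤ u y + ν * t - φ y t := hy
    simp only []
    linarith
  have hcont2 : Continuous (fun s : ℝ => ((x : EuclideanSpace ℝ (Fin n)), s)) :=
    continuous_const.prodMk continuous_id
  have h2 : IsLocalMin (fun s => u x + ν * s - φ x s) t := by
    have := (hcont2.tendsto t).eventually hmin'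
    exact this
  have hda : HasDerivAt (fun s => u x + ν * s - φ x s) (ν - a) t := by
    exact (((hasDerivAt_const t (u x)).add ((hasDerivAt_id t).const_mul ν)).sub hderiv).congr_deriv (by ring)
  have ha : ν - a = 0 := h2.hasDerivAt_eq_zero hda
  have hψ : ContDiff ℝ 1 (fun y => φ y t) :=
    hφ.comp (contDiff_id.prodMk contDiff_const)
  have := hu (fun y => φ y t) hψ x p hgrad h1
  have h3 : ν + H x p ≥ 0 := this
  show a + H x p ≥ 0
  linarith

end Aux

/-- Long-time ergodic limit: a bounded usc subsolution at level `μ` below `w₀` forces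
`liminf min_x w(x,t)/t ≥ μ`; a bounded lsc supersolution at level `ν` with `w₀ ≤ u + C`
forces `limsup max_x w(x,t)/t ≤ ν`; hence if `μ = ν = λ̄` then `w(x,t)/t → λ̄`
uniformly in `x`. -/
theorem long_time_ergodic_limit {n : ℕ}
    (H : EuclideanSpace ℝ (Fin n) → EuclideanSpace ℝ (Fin n) → ℝ)
    (hH : Continuous fun q : EuclideanSpace ℝ (Fin n) × EuclideanSpace ℝ (Fin n) => H q.1 q.2)
    (w : EuclideanSpace ℝ (Fin n) → ℝ → ℝ) (w₀ : EuclideanSpace ℝ (Fin n) → ℝ)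
    (hw_cont : Continuous fun q : EuclideanSpace ℝ (Fin n) × ℝ => w q.1 q.2)
    (hw_strip : ∀ T > (0:ℝ), ∃ M, ∀ x, ∀ t ∈ Set.Icc (0:ℝ) T, |w x t| ≤ M)
    (hw_sub : IsParabSubsolution (fun x _ a p => a + H x p) w)
    (hw_sup : IsParabSupersolution (fun x _ a p => a + H x p) w)
    (hw0 : ∀ x, w x 0 = w₀ x)
    -- the parabolic comparison principle
    (hcomp : ∀ u₁ v₁ : EuclideanSpace ℝ (Fin n) → ℝ → ℝ,
      UpperSemicontinuous (fun q : EuclideanSpace ℝ (Fin n) × ℝ => u₁ q.1 q.2) →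
      LowerSemicontinuous (fun q : EuclideanSpace ℝ (Fin n) × ℝ => v₁ q.1 q.2) →
      (∀ T > (0:ℝ), ∃ M, ∀ x, ∀ t ∈ Set.Icc (0:ℝ) T, |u₁ x t| ≤ M ∧ |v₁ x t| ≤ M) →
      IsParabSubsolution (fun x _ a p => a + H x p) u₁ →
      IsParabSupersolution (fun x _ a p => a + H x p) v₁ →
      ∀ M : ℝ, (∀ y, u₁ y 0 - v₁ y 0 ≤ M) → ∀ x t, 0 ≤ t → u₁ x t - v₁ x t ≤ M)
    (μ ν C : ℝ)
    (v : EuclideanSpace ℝ (Fin n) → ℝ)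
    (hv_bdd : IsBdd v) (hv_usc : UpperSemicontinuous v)
    (hv_sub : IsViscSubsolution (fun x _ p => μ + H x p) v)
    (hv_le : ∀ x, v x ≤ w₀ x)
    (u : EuclideanSpace ℝ (Fin n) → ℝ)
    (hu_bdd : IsBdd u) (hu_lsc : LowerSemicontinuous u)
    (hu_sup : IsViscSupersolution (fun x _ p => ν + H x p) u)
    (hu_ge : ∀ x, w₀ x ≤ u x + C) :
    (∀ ε > (0:ℝ), ∃ T, ∀ t ≥ T, ∀ x, μ - ε ≤ w x t / t) ∧
    (∀ ε > (0:ℝ), ∃ T, ∀ t ≥ T, ∀ x, w x t / t ≤ ν + ε) ∧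
    (μ = ν → ∀ ε > (0:ℝ), ∃ T, ∀ t ≥ T, ∀ x, |w x t / t - μ| ≤ ε) := by
  obtain ⟨Mv, hMv⟩ := hv_bdd
  obtain ⟨Mu, hMu⟩ := hu_bdd
  -- lower bound : v x + μ t ≤ w x t
  have hlow : ∀ x t, 0 ≤ t → v x + μ * t ≤ w x t := by
    intro x t htt
    have husc : UpperSemicontinuous (fun q : EuclideanSpace ℝ (Fin n) × ℝ =>
        v q.1 + μ * q.2) :=
      (hv_usc.comp continuous_fst).add
        ((continuous_snd.const_smul μ).upperSemicontinuous)
    have hlsc : LowerSemicontinuous (fun q : EuclideanSpace ℝ (Fin n) × ℝ => w q.1 q.2) :=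
      hw_cont.lowerSemicontinuous
    have hbd : ∀ T > (0:ℝ), ∃ M, ∀ x, ∀ t ∈ Set.Icc (0:ℝ) T,
        |v x + μ * t| ≤ M ∧ |w x t| ≤ M := by
      intro T hT
      obtain ⟨Mw, hMw⟩ := hw_strip T hT
      refine ⟨max (Mv + |μ| * T) Mw, fun x t htm => ?_⟩
      constructor
      · refine le_max_of_le_left ?_
        calc |v x + μ * t| ≤ |v x| + |μ * t| := abs_add_le _ _
          _ ≤ Mv + |μ| * T := by
              have := hMv x
              have h1 : |μ * t| = |μ| * |t| := abs_mul μ t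
              have h2 : |t| ≤ T := by
                rw [abs_of_nonneg htm.1]; exact htm.2
              nlinarith [abs_nonneg μ]
      · exact le_max_of_le_right (hMw x t htm)
    have := hcomp (fun x t => v x + μ * t) w husc hlsc hbd
      (parab_of_stat_sub H μ v hv_sub) hw_sup 0
      (fun y => by simpa [hw0 y] using sub_nonpos.mpr (hv_le y)) x t htt
    have h5 : v x + μ * t - w x t ≤ 0 := this
    linarith
  -- upper bound : w x t ≤ u x + ν t + C
  have hupp : ∀ x t, 0 ≤ t → w x t ≤ u x + ν * t + C := by
    intro x t htt
    have husc : UpperSemicontinuous (fun q : EuclideanSpace ℝ (Fin n) × ℝ => w q.1 q.2) :=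
      hw_cont.upperSemicontinuous
    have hlsc : LowerSemicontinuous (fun q : EuclideanSpace ℝ (Fin n) × ℝ =>
        u q.1 + ν * q.2) :=
      (hu_lsc.comp continuous_fst).add
        ((continuous_snd.const_smul ν).lowerSemicontinuous)
    have hbd : ∀ T > (0:ℝ), ∃ M, ∀ x, ∀ t ∈ Set.Icc (0:ℝ) T,
        |w x t| ≤ M ∧ |u x + ν * t| ≤ M := by
      intro T hT
      obtain ⟨Mw, hMw⟩ := hw_strip T hT
      refine ⟨max Mw (Mu + |ν| * T), fun x t htm => ?_⟩
      constructor
      · exact le_max_of_le_left (hMw x t htm)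
      · refine le_max_of_le_right ?_
        calc |u x + ν * t| ≤ |u x| + |ν * t| := abs_add_le _ _
          _ ≤ Mu + |ν| * T := by
              have := hMu x
              have h1 : |ν * t| = |ν| * |t| := abs_mul ν t
              have h2 : |t| ≤ T := by
                rw [abs_of_nonneg htm.1]; exact htm.2
              nlinarith [abs_nonneg ν]
    have := hcomp w (fun x t => u x + ν * t) husc hlsc hbd hw_sub
      (parab_of_stat_sup H ν u hu_sup) C
      (fun y => by simpa [hw0 y] using sub_left_le_of_le_add (hu_ge y)) x t htt
    have h5 : w x t - (u x + ν * t) ≤ C := this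
    linarith
  have part1 : ∀ ε > (0:ℝ), ∃ T, ∀ t ≥ T, ∀ x, μ - ε ≤ w x t / t := by
    intro ε hε
    refine ⟨max 1 (Mv / ε), fun t ht x => ?_⟩
    have ht1 : (1:ℝ) ≤ t := le_trans (le_max_left _ _) ht
    have htpos : 0 < t := lt_of_lt_of_le one_pos ht1
    have hMvε : Mv / ε ≤ t := le_trans (le_max_right _ _) ht
    have hMvt : Mv ≤ ε * t := by
      rw [div_le_iff₀ hε] at hMvε; linarith
    have hl := hlow x t htpos.le
    have hv1 : -Mv ≤ v x := neg_le_of_abs_le (hMv x)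
    rw [le_div_iff₀ htpos]
    nlinarith
  have part2 : ∀ ε > (0:ℝ), ∃ T, ∀ t ≥ T, ∀ x, w x t / t ≤ ν + ε := by
    intro ε hε
    refine ⟨max 1 ((Mu + |C|) / ε), fun t ht x => ?_⟩
    have ht1 : (1:ℝ) ≤ t := le_trans (le_max_left _ _) ht
    have htpos : 0 < t := lt_of_lt_of_le one_pos ht1
    have hMε : (Mu + |C|) / ε ≤ t := le_trans (le_max_right _ _) ht
    have hMt : Mu + |C| ≤ ε * t := by
      rw [div_le_iff₀ hε] at hMε; linarith
    have hu1 : u x ≤ Mu := le_of_abs_le (hMu x)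
    have hC : C ≤ |C| := le_abs_self C
    have hh := hupp x t htpos.le
    rw [div_le_iff₀ htpos]
    nlinarith
  refine ⟨part1, part2, fun hμν ε hε => ?_⟩
  obtain ⟨T1, hT1⟩ := part1 ε hε
  obtain ⟨T2, hT2⟩ := part2 ε hε
  refine ⟨max T1 T2, fun t ht x => ?_⟩
  have h1 := hT1 t (le_trans (le_max_left _ _) ht) x
  have h2 := hT2 t (le_trans (le_max_right _ _) ht) x
  rw [abs_le]
  constructor <;> [linarith; (rw [hμν]; linarith)]
end
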